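/- Let X be a compact Hausdorff space and let (U_i)_{i ∈ I} be a finite open cover of X. Then there exist a subset J ⊆ I and an open cover (V_j)_{j ∈ J} of X such that for every k ∈ J, the closure of V_k is contained in U_k, and V_k ∖ ⋃_{j ∈ J, j ≠ k} closure(V_j) is nonempty. -/

import Mathlib

/-- Let `X` be a compact Hausdorff space and `(Uᵢ)_{i ∈ I}` a finite open
cover of `X`.  Then there exist a subset `J ⊆ I` and an open cover `(Vⱼ)_{j ∈ J}` of `X` such
that for every `k ∈ J` the closure of `Vₖ` is contained in `Uₖ`, and
`Vₖ \ ⋃_{j ∈ J, j ≠ k} closure(Vⱼ)` is nonempty. -/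
theorem exists_shrinking_with_nonempty_differences
    {X : Type*} [TopologicalSpace X] [CompactSpace X] [T2Space X]
    {I : Type*} [Finite I] (U : I → Set X)
    (hUopen : ∀ i, IsOpen (U i)) (hUcover : (⋃ i, U i) = Set.univ) :
    ∃ (J : Set I) (V : I → Set X),
      (∀ j ∈ J, IsOpen (V j)) ∧ (⋃ j ∈ J, V j) = Set.univ ∧
      ∀ k ∈ J, closure (V k) ⊆ U k ∧
        (V k \ ⋃ j ∈ J \ {k}, closure (V j)).Nonempty := by
  -- First shrinking: V with closure (V i) ⊆ U i, still a cover.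
  obtain ⟨V, hVcov, hVopen, hVcl⟩ :=
    exists_iUnion_eq_closure_subset hUopen (fun x => Set.finite_univ.subset (Set.subset_univ _))
      hUcover
  -- Choose a minimal J ⊆ I with ⋃ j ∈ J, V j = univ.
  set S : Set (Set I) := {J | (⋃ j ∈ J, V j) = Set.univ} with hS
  have hSne : S.Nonempty := ⟨Set.univ, by simp only [hS, Set.mem_setOf_eq, Set.biUnion_univ]; exact hVcov⟩
  obtain ⟨J, hJS, hJmin'⟩ := Set.Finite.exists_minimalFor id S (Set.toFinite S) hSne
  have hJmin : ∀ a' ∈ S, id a' ≤ id J → id J = id a' :=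
    fun a' ha' hle => le_antisymm (hJmin' ha' hle) hle
  have hJcov : (⋃ j ∈ J, V j) = Set.univ := hJS
  -- For each k ∈ J, pick a point missed by the others.
  have hwit : ∀ k ∈ J, ∃ x, x ∈ V k ∧ ∀ j ∈ J \ {k}, x ∉ V j := by
    intro k hk
    have hne : (⋃ j ∈ J \ {k}, V j) ≠ Set.univ := by
      intro h
      have heq : id J = id (J \ {k}) := hJmin _ h (Set.diff_subset)
      simp only [id] at heq
      have h2 : k ∈ J \ {k} := by rw [← heq]; exact hk
      exact h2.2 rfl
    obtain ⟨x, hx⟩ := (Set.ne_univ_iff_exists_notMem _).1 hne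
    have hxJ : x ∈ ⋃ j ∈ J, V j := hJcov ▸ Set.mem_univ x
    obtain ⟨j, hj, hxj⟩ := Set.mem_iUnion₂.1 hxJ
    have hjk : j = k := by
      by_contra h
      exact hx (Set.mem_biUnion ⟨hj, h⟩ hxj)
    refine ⟨x, hjk ▸ hxj, fun j hj hxj => hx (Set.mem_biUnion hj hxj)⟩
  -- Second shrinking, over J: W with closure (W j) ⊆ V j.
  have hJcov' : (⋃ j : J, V j) = Set.univ := by
    rw [← hJcov]; exact (Set.iUnion_subtype _ _).symm ▸ rfl
  obtain ⟨W, hWcov, hWopen, hWcl⟩ :=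
    exists_iUnion_eq_closure_subset (ι := J) (u := fun j => V j) (fun j => hVopen j)
      (fun x => Set.finite_univ.subset (Set.subset_univ _)) hJcov'
  classical
  refine ⟨J, fun i => if h : i ∈ J then W ⟨i, h⟩ else ∅, ?_, ?_, ?_⟩
  · intro j hj; simp only [dif_pos hj]; exact hWopen _
  · rw [← hWcov]
    ext x
    simp only [Set.mem_iUnion]
    constructor
    · rintro ⟨j, hj, hx⟩; rw [dif_pos hj] at hx; exact ⟨⟨j, hj⟩, hx⟩
    · rintro ⟨⟨j, hj⟩, hx⟩; exact ⟨j, hj, by rwa [dif_pos hj]⟩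
  · intro k hk
    have hclk : closure (if h : k ∈ J then W ⟨k, h⟩ else ∅) ⊆ V k := by
      rw [dif_pos hk]; exact hWcl ⟨k, hk⟩
    refine ⟨hclk.trans ((subset_closure).trans (hVcl k)), ?_⟩
    obtain ⟨x, hxk, hxnot⟩ := hwit k hk
    -- x is in some W j; closure W j ⊆ V j forces j = k.
    have hxW : x ∈ ⋃ j : J, W j := hWcov ▸ Set.mem_univ x
    obtain ⟨⟨j, hj⟩, hxj⟩ := Set.mem_iUnion.1 hxW
    have hjk : j = k := by
      by_contra h
      exact hxnot j ⟨hj, h⟩ (hWcl ⟨j, hj⟩ (subset_closure hxj))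
    subst hjk
    refine ⟨x, ?_, ?_⟩
    · simp only [dif_pos hj]; exact hxj
    · intro hx
      obtain ⟨i, hi, hxi⟩ := Set.mem_iUnion₂.1 hx
      have : closure (if h : i ∈ J then W ⟨i, h⟩ else ∅) ⊆ V i := by
        rw [dif_pos hi.1]; exact hWcl ⟨i, hi.1⟩
      exact hxnot i hi (this hxi)
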